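/- For every natural number r and all rational numbers χ, s, and κ, one has (1/2)χ² + χ(−r² + 1/2) + κ(−r⁴/24 + r³/12 + r²/24 − r/12) + s(−r³/6 + r/6) + r⁴/4 − r²/4 = C(χ, 2) − (r² − 1)χ − binom(r+1, 3)·s − binom(r+1, 4)·κ + (1/2)·binom(r², 2), where C(x, k) := x(x−1)⋯(x−k+1)/k! denotes the generalized binomial coefficient for x ∈ ℚ and k ∈ ℕ, and binom denotes the ordinary binomial coefficient of natural numbers. -/

import Mathlib

/-- The generalized binomial coefficient `C(x, k) = x(x-1)⋯(x-k+1)/k!` for `x ∈ ℚ`, `k ∈ ℕ`. -/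
def qchoose (x : ℚ) (k : ℕ) : ℚ := (∏ i ∈ Finset.range k, (x - i)) / (Nat.factorial k)

lemma cast_choose_two' (n : ℕ) : (n.choose 2 : ℚ) = n * (n - 1) / 2 := by
  induction n with
  | zero => norm_num
  | succ m ih =>
    rw [Nat.choose_succ_succ]
    push_cast [ih, Nat.choose_one_right]
    field_simp
    ring

lemma cast_choose_three (n : ℕ) : (n.choose 3 : ℚ) = n * (n - 1) * (n - 2) / 6 := by
  induction n with
  | zero => norm_num
  | succ m ih =>
    rw [Nat.choose_succ_succ]
    push_cast [ih, cast_choose_two']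
    field_simp
    ring

lemma cast_choose_four (n : ℕ) : (n.choose 4 : ℚ) = n * (n - 1) * (n - 2) * (n - 3) / 24 := by
  induction n with
  | zero => norm_num
  | succ m ih =>
    rw [Nat.choose_succ_succ]
    push_cast [ih, cast_choose_three]
    field_simp
    ring

/-- Verification of Theorem A for n = 2 and arbitrary rank r: the general double point
formula `y₂` equals the Euler characteristic
`C(χ, 2) - (r² - 1)χ - binom(r+1,3)·s - binom(r+1,4)·κ + (1/2)·binom(r²,2)`. -/
theorem stmt_6 (r : ℕ) (χ s κ : ℚ) :
    (1 / 2) * χ ^ 2 + χ * (-(r : ℚ) ^ 2 + 1 / 2)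
      + κ * (-(r : ℚ) ^ 4 / 24 + (r : ℚ) ^ 3 / 12 + (r : ℚ) ^ 2 / 24 - (r : ℚ) / 12)
      + s * (-(r : ℚ) ^ 3 / 6 + (r : ℚ) / 6)
      + (r : ℚ) ^ 4 / 4 - (r : ℚ) ^ 2 / 4
    = qchoose χ 2 - ((r : ℚ) ^ 2 - 1) * χ - (Nat.choose (r + 1) 3 : ℚ) * s
      - (Nat.choose (r + 1) 4 : ℚ) * κ + (1 / 2) * (Nat.choose (r ^ 2) 2 : ℚ) := by
  rw [cast_choose_two', cast_choose_three, cast_choose_four]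
  simp only [qchoose, Finset.prod_range_succ, Finset.prod_range_zero]
  push_cast
  field_simp
  ring
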